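/- Let Λ, Λ̃ be bounded Markov jump kernels admitting adjoint kernels Λ*, Λ̃* with respect to a reference measure ν, and let A_Λ*, A_Λ̃* be the corresponding L¹(ν)-adjoint generators given by A_Λ*(ρ) = Λ*ρ − Λ(x,Π)ρ. Then for every ρ ∈ L¹(ν), ‖A_Λ*(ρ) − A_Λ̃*(ρ)‖_{L¹(ν)} ≤ 2 ∫_Π ‖Λ(x,·) − Λ̃(x,·)‖_TV |ρ(x)| dν(x). In particular, ‖A_Λ* − A_Λ̃*‖_{L¹(ν)→L¹(ν)} ≤ 2 ‖Λ − Λ̃‖_J. -/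

import Mathlib

open MeasureTheory ProbabilityTheory

lemma adj_key {X : Type*} [MeasurableSpace X] (ν : Measure X) [IsFiniteMeasure ν]
    (Λ Λs : Kernel X X) [IsFiniteKernel Λ] [IsFiniteKernel Λs]
    (hadj : ν.compProd Λ = (ν.compProd Λs).map Prod.swap)
    (ρ ψ : X → ℝ) (hρm : Measurable ρ) (hρi : Integrable ρ ν)
    (hψm : Measurable ψ) (hψb : ∀ y, |ψ y| ≤ 1) :
    Integrable (fun x => ρ x * ∫ y, ψ y ∂(Λ x)) ν ∧
    Integrable (fun x => ψ x * ∫ y, ρ y ∂(Λs x)) ν ∧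
    ∫ x, ψ x * ∫ y, ρ y ∂(Λs x) ∂ν = ∫ x, ρ x * ∫ y, ψ y ∂(Λ x) ∂ν := by
  set f : X × X → ℝ := fun p => ρ p.1 * ψ p.2 with hf
  have hfm : Measurable f := (hρm.comp measurable_fst).mul (hψm.comp measurable_snd)
  have hCne : Kernel.bound Λ ≠ ⊤ := (Kernel.bound_lt_top Λ).ne
  have habs : ∀ x y : X, ‖f (x, y)‖ ≤ |ρ x| := by
    intro x y
    have : ‖f (x, y)‖ = |ρ x| * |ψ y| := abs_mul _ _
    rw [this]
    calc |ρ x| * |ψ y| ≤ |ρ x| * 1 := mul_le_mul_of_nonneg_left (hψb y) (abs_nonneg _)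
      _ = |ρ x| := mul_one _
  -- integrability of f on ν ⊗ Λ
  have hfint : Integrable f (ν.compProd Λ) := by
    rw [Measure.integrable_compProd_iff hfm.aestronglyMeasurable]
    constructor
    · refine Filter.Eventually.of_forall fun x => ?_
      exact (integrable_const (|ρ x|)).mono'
        ((hρm.comp measurable_const).mul hψm).aestronglyMeasurable
        (Filter.Eventually.of_forall fun y => habs x y)
    · refine (hρi.norm.const_mul (Kernel.bound Λ).toReal).mono' ?_ ?_
      · exact (hfm.norm.stronglyMeasurable.integral_kernel_prod_right').aestronglyMeasurable
      · refine Filter.Eventually.of_forall fun x => ?_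
        have h1 : ∫ y, ‖f (x, y)‖ ∂(Λ x) ≤ ∫ _, |ρ x| ∂(Λ x) :=
          integral_mono_of_nonneg (Filter.Eventually.of_forall fun y => norm_nonneg _)
            (integrable_const _) (Filter.Eventually.of_forall fun y => habs x y)
        have h2 : ∫ _, |ρ x| ∂(Λ x) = (Λ x Set.univ).toReal * |ρ x| := by
          simp [integral_const, measureReal_def]
        have h3 : (Λ x Set.univ).toReal ≤ (Kernel.bound Λ).toReal :=
          ENNReal.toReal_mono hCne (Kernel.measure_le_bound Λ x _)
        have h4 : (0:ℝ) ≤ ∫ y, ‖f (x, y)‖ ∂(Λ x) := integral_nonneg fun y => norm_nonneg _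
        rw [Real.norm_of_nonneg h4]
        calc ∫ y, ‖f (x, y)‖ ∂(Λ x) ≤ (Λ x Set.univ).toReal * |ρ x| := h2 ▸ h1
          _ ≤ (Kernel.bound Λ).toReal * |ρ x| :=
            mul_le_mul_of_nonneg_right h3 (abs_nonneg _)
          _ = (Kernel.bound Λ).toReal * ‖ρ x‖ := rfl
  -- integrability of f ∘ swap on ν ⊗ Λs
  have hswm : AEStronglyMeasurable f ((ν.compProd Λs).map Prod.swap) := by
    rw [← hadj]; exact hfm.aestronglyMeasurable
  have hswapint : Integrable (f ∘ Prod.swap) (ν.compProd Λs) := by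
    have h := hfint
    rw [hadj] at h
    exact (integrable_map_measure hswm measurable_swap.aemeasurable).mp h
  -- first integrability claim
  have hint1 : Integrable (fun x => ρ x * ∫ y, ψ y ∂(Λ x)) ν := by
    have h2 := ((Measure.integrable_compProd_iff hfm.aestronglyMeasurable).mp hfint).2
    have hF : Integrable (fun x => ∫ y, f (x, y) ∂(Λ x)) ν := by
      refine h2.mono' (hfm.stronglyMeasurable.integral_kernel_prod_right').aestronglyMeasurable ?_
      exact Filter.Eventually.of_forall fun x => norm_integral_le_integral_norm _
    refine hF.congr (Filter.Eventually.of_forall fun x => ?_)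
    simp only [hf]
    exact integral_const_mul _ _
  -- second integrability claim
  have hswm2 : Measurable (f ∘ Prod.swap) := hfm.comp measurable_swap
  have hint2 : Integrable (fun x => ψ x * ∫ y, ρ y ∂(Λs x)) ν := by
    have h2 := ((Measure.integrable_compProd_iff hswm2.aestronglyMeasurable).mp hswapint).2
    have hF : Integrable (fun x => ∫ y, (f ∘ Prod.swap) (x, y) ∂(Λs x)) ν := by
      refine h2.mono' (hswm2.stronglyMeasurable.integral_kernel_prod_right').aestronglyMeasurable ?_
      exact Filter.Eventually.of_forall fun x => norm_integral_le_integral_norm _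
    refine hF.congr (Filter.Eventually.of_forall fun x => ?_)
    simp only [hf, Function.comp, Prod.swap]
    rw [integral_mul_const, mul_comm]
  refine ⟨hint1, hint2, ?_⟩
  -- the integral identity
  have e1 : ∫ x, ψ x * ∫ y, ρ y ∂(Λs x) ∂ν = ∫ p, (f ∘ Prod.swap) p ∂(ν.compProd Λs) := by
    rw [Measure.integral_compProd hswapint]
    congr 1
    funext x
    simp only [hf, Function.comp, Prod.swap]
    rw [integral_mul_const, mul_comm]
  have e2 : ∫ p, (f ∘ Prod.swap) p ∂(ν.compProd Λs) = ∫ p, f p ∂(ν.compProd Λ) := by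
    rw [hadj, integral_map measurable_swap.aemeasurable hswm]
    rfl
  have e3 : ∫ p, f p ∂(ν.compProd Λ) = ∫ x, ρ x * ∫ y, ψ y ∂(Λ x) ∂ν := by
    rw [Measure.integral_compProd hfint]
    congr 1
    funext x
    simp only [hf]
    exact integral_const_mul _ _
  rw [e1, e2, e3]

/-- Stability of the adjoint jump generator A_Λ*(ρ) = Λ*ρ − Λ(x,Π)ρ with respect to the
kernel, in L¹(ν):
‖A_Λ*(ρ) − A_Λ̃*(ρ)‖_{L¹(ν)} ≤ 2 ∫ ‖Λ(x,·) − Λ̃(x,·)‖_TV |ρ(x)| dν(x), and consequently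
the operator-norm bound 2‖Λ − Λ̃‖_J.  The adjoint relation Λ(x,dy)ν(dx) = Λ*(y,dx)ν(dy)
is expressed as equality of the two measures on X × X, and the total variation norm of
Λ(x,·) − Λ̃(x,·) through its dual characterization (an upper bound d x). -/
theorem stmt_5 {X : Type*} [MeasurableSpace X] (ν : Measure X) [IsFiniteMeasure ν]
    (Λ Λt Λs Λts : Kernel X X)
    [IsFiniteKernel Λ] [IsFiniteKernel Λt] [IsFiniteKernel Λs] [IsFiniteKernel Λts]
    (hΛ0 : ∀ x, Λ x {x} = 0) (hΛt0 : ∀ x, Λt x {x} = 0)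
    (hadj : ν.compProd Λ = (ν.compProd Λs).map Prod.swap)
    (hadjt : ν.compProd Λt = (ν.compProd Λts).map Prod.swap)
    (ρ : X → ℝ) (hρm : Measurable ρ) (hρi : Integrable ρ ν)
    (hρint : ∀ᵐ x ∂ν, Integrable ρ (Λs x)) (hρint' : ∀ᵐ x ∂ν, Integrable ρ (Λts x))
    (d : X → ℝ) (hdm : Measurable d)
    (hd : ∀ x, ∀ ψ : X → ℝ, Measurable ψ → (∀ y, |ψ y| ≤ 1) →
      |(∫ y, ψ y ∂(Λ x)) - (∫ y, ψ y ∂(Λt x))| ≤ d x)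
    (hdi : Integrable (fun x => d x * |ρ x|) ν) :
    (∫ x, |((∫ y, ρ y ∂(Λs x)) - (Λ x Set.univ).toReal * ρ x) -
        ((∫ y, ρ y ∂(Λts x)) - (Λt x Set.univ).toReal * ρ x)| ∂ν)
      ≤ 2 * ∫ x, d x * |ρ x| ∂ν ∧
    (∀ Dc : ℝ, (∀ x, d x ≤ Dc) →
      (∫ x, |((∫ y, ρ y ∂(Λs x)) - (Λ x Set.univ).toReal * ρ x) -
          ((∫ y, ρ y ∂(Λts x)) - (Λt x Set.univ).toReal * ρ x)| ∂ν)
        ≤ 2 * Dc * ∫ x, |ρ x| ∂ν) := by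
    classical
  set A : X → ℝ := fun x => ∫ y, ρ y ∂(Λs x) with hA
  set B : X → ℝ := fun x => ∫ y, ρ y ∂(Λts x) with hB
  set a : X → ℝ := fun x => (Λ x Set.univ).toReal with ha
  set b : X → ℝ := fun x => (Λt x Set.univ).toReal with hb
  have hone : ∀ (κ : Kernel X X) [IsFiniteKernel κ] (x : X),
      ∫ _, (1:ℝ) ∂(κ x) = (κ x Set.univ).toReal := by
    intro κ _ x; simp [integral_const, measureReal_def]
  -- |a - b| ≤ d pointwise
  have habd : ∀ x, |a x - b x| ≤ d x := by
    intro x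
    have := hd x (fun _ => 1) measurable_const (fun y => by norm_num)
    rwa [hone Λ x, hone Λt x] at this
  -- d is nonnegative
  have hd0 : ∀ x, 0 ≤ d x := by
    intro x
    have := hd x (fun _ => 0) measurable_const (fun y => by norm_num)
    simpa using this
  -- Integrability of A and B, via adj_key with ψ = 1
  have K1 := adj_key ν Λ Λs hadj ρ (fun _ => 1) hρm hρi measurable_const (fun y => by norm_num)
  have K1t := adj_key ν Λt Λts hadjt ρ (fun _ => 1) hρm hρi measurable_const (fun y => by norm_num)
  have hAi : Integrable A ν := by
    refine K1.2.1.congr (Filter.Eventually.of_forall fun x => ?_)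
    simp [hA]
  have hBi : Integrable B ν := by
    refine K1t.2.1.congr (Filter.Eventually.of_forall fun x => ?_)
    simp [hB]
  -- measurability of g = A - B
  have hAm : Measurable A := by
    have : StronglyMeasurable fun p : X × X => ρ p.2 :=
      (hρm.comp measurable_snd).stronglyMeasurable
    exact this.integral_kernel_prod_right'.measurable
  have hBm : Measurable B := by
    have : StronglyMeasurable fun p : X × X => ρ p.2 :=
      (hρm.comp measurable_snd).stronglyMeasurable
    exact this.integral_kernel_prod_right'.measurable
  set g : X → ℝ := fun x => A x - B x with hg
  have hgm : Measurable g := hAm.sub hBm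
  have hgi : Integrable g ν := hAi.sub hBi
  set ψ : X → ℝ := fun x => if 0 ≤ g x then 1 else -1 with hψ
  have hψm : Measurable ψ :=
    Measurable.ite (measurableSet_le measurable_const hgm) measurable_const measurable_const
  have hψb : ∀ y, |ψ y| ≤ 1 := by
    intro y; simp only [hψ]; split <;> norm_num
  have K := adj_key ν Λ Λs hadj ρ ψ hρm hρi hψm hψb
  have Kt := adj_key ν Λt Λts hadjt ρ ψ hρm hρi hψm hψb
  -- key estimate: ∫ |g| ≤ ∫ d |ρ|
  have hkey : ∫ x, |g x| ∂ν ≤ ∫ x, d x * |ρ x| ∂ν := by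
    have e0 : ∫ x, |g x| ∂ν = ∫ x, ψ x * g x ∂ν := by
      refine integral_congr_ae (Filter.Eventually.of_forall fun x => ?_)
      simp only [hψ]
      by_cases h : 0 ≤ g x
      · simp [h, abs_of_nonneg h]
      · push_neg at h
        simp [not_le.mpr h, abs_of_neg h]
    have e1 : ∫ x, ψ x * g x ∂ν = (∫ x, ψ x * A x ∂ν) - ∫ x, ψ x * B x ∂ν := by
      rw [← integral_sub K.2.1 Kt.2.1]
      refine integral_congr_ae (Filter.Eventually.of_forall fun x => ?_)
      simp [hg]; ring
    have e2 : (∫ x, ψ x * A x ∂ν) - ∫ x, ψ x * B x ∂ν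
        = ∫ x, ρ x * ((∫ y, ψ y ∂(Λ x)) - ∫ y, ψ y ∂(Λt x)) ∂ν := by
      rw [K.2.2, Kt.2.2, ← integral_sub K.1 Kt.1]
      refine integral_congr_ae (Filter.Eventually.of_forall fun x => ?_)
      ring
    have e3 : ∫ x, ρ x * ((∫ y, ψ y ∂(Λ x)) - ∫ y, ψ y ∂(Λt x)) ∂ν
        ≤ ∫ x, d x * |ρ x| ∂ν := by
      refine integral_mono ((K.1.sub Kt.1).congr (Filter.Eventually.of_forall fun x => by
        show _ = ρ x * _; simp; ring)) hdi fun x => ?_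
      calc ρ x * ((∫ y, ψ y ∂(Λ x)) - ∫ y, ψ y ∂(Λt x))
          ≤ |ρ x * ((∫ y, ψ y ∂(Λ x)) - ∫ y, ψ y ∂(Λt x))| := le_abs_self _
        _ = |ρ x| * |(∫ y, ψ y ∂(Λ x)) - ∫ y, ψ y ∂(Λt x)| := abs_mul _ _
        _ ≤ |ρ x| * d x := mul_le_mul_of_nonneg_left (hd x ψ hψm hψb) (abs_nonneg _)
        _ = d x * |ρ x| := mul_comm _ _
    rw [e0, e1, e2]; exact e3
  -- main estimate
  have hmain : (∫ x, |(A x - a x * ρ x) - (B x - b x * ρ x)| ∂ν)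
      ≤ 2 * ∫ x, d x * |ρ x| ∂ν := by
    have hsum : Integrable (fun x => |g x| + d x * |ρ x|) ν := hgi.abs.add hdi
    have hle : ∫ x, |(A x - a x * ρ x) - (B x - b x * ρ x)| ∂ν
        ≤ ∫ x, |g x| + d x * |ρ x| ∂ν := by
      refine integral_mono_of_nonneg (Filter.Eventually.of_forall fun x => abs_nonneg _)
        hsum (Filter.Eventually.of_forall fun x => ?_)
      have h1 : (A x - a x * ρ x) - (B x - b x * ρ x) = g x - (a x - b x) * ρ x := by
        simp [hg]; ring
      show |A x - a x * ρ x - (B x - b x * ρ x)| ≤ |g x| + d x * |ρ x|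
      rw [h1]
      calc |g x - (a x - b x) * ρ x| ≤ |g x| + |(a x - b x) * ρ x| := abs_sub _ _
        _ = |g x| + |a x - b x| * |ρ x| := by rw [abs_mul]
        _ ≤ |g x| + d x * |ρ x| := by
            have := mul_le_mul_of_nonneg_right (habd x) (abs_nonneg (ρ x))
            linarith
    have hadd : ∫ x, |g x| + d x * |ρ x| ∂ν = (∫ x, |g x| ∂ν) + ∫ x, d x * |ρ x| ∂ν :=
      integral_add hgi.abs hdi
    calc ∫ x, |(A x - a x * ρ x) - (B x - b x * ρ x)| ∂ν
        ≤ (∫ x, |g x| ∂ν) + ∫ x, d x * |ρ x| ∂ν := by rw [← hadd]; exact hle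
      _ ≤ (∫ x, d x * |ρ x| ∂ν) + ∫ x, d x * |ρ x| ∂ν := by linarith
      _ = 2 * ∫ x, d x * |ρ x| ∂ν := by ring
  refine ⟨hmain, fun Dc hDc => ?_⟩
  have h2 : ∫ x, d x * |ρ x| ∂ν ≤ Dc * ∫ x, |ρ x| ∂ν := by
    have : Integrable (fun x => Dc * |ρ x|) ν := hρi.abs.const_mul Dc
    calc ∫ x, d x * |ρ x| ∂ν ≤ ∫ x, Dc * |ρ x| ∂ν :=
        integral_mono hdi this fun x =>
          mul_le_mul_of_nonneg_right (hDc x) (abs_nonneg _)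
      _ = Dc * ∫ x, |ρ x| ∂ν := integral_const_mul _ _
  calc (∫ x, |(A x - a x * ρ x) - (B x - b x * ρ x)| ∂ν)
      ≤ 2 * ∫ x, d x * |ρ x| ∂ν := hmain
    _ ≤ 2 * (Dc * ∫ x, |ρ x| ∂ν) := by linarith
    _ = 2 * Dc * ∫ x, |ρ x| ∂ν := by ring
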